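/- Let G be a group, let A₁,…,Aₙ and B₁,…,Bₙ be subgroups of G with isomorphisms φᵢ : Aᵢ ≃ Bᵢ for 1 ≤ i ≤ n, let H = G*_{φ₁,…,φₙ} be the HNN extension with stable letters t₁,…,tₙ, and let ι : G → H be the canonical homomorphism. Let K be a normal subgroup of G that is good with respect to H, let φ̄ᵢ : AᵢK/K ≃ BᵢK/K be the isomorphisms induced by the φᵢ on the images of Aᵢ and Bᵢ in G/K, let H_K = (G/K)*_{φ̄₁,…,φ̄ₙ} with stable letters t̄₁,…,t̄ₙ, and let φ_K : H → H_K be the surjective homomorphism determined by ι(g) ↦ gK for g ∈ G and tᵢ ↦ t̄ᵢ. Then the kernel of φ_K equals the normal closure in H of ι(K). -/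

import Mathlib

/-- The relations `tᵢ⁻¹ a tᵢ φᵢ(a)⁻¹` defining an HNN extension with several stable letters. -/
def MultiHNNRels {G : Type*} [Group G] {ι : Type*} (A B : ι → Subgroup G)
    (φ : ∀ i, A i ≃* B i) : Set (Monoid.Coprod G (FreeGroup ι)) :=
  ⋃ i, Set.range fun a : A i =>
    (Monoid.Coprod.inr (FreeGroup.of i) : Monoid.Coprod G (FreeGroup ι))⁻¹ *
      Monoid.Coprod.inl (a : G) * Monoid.Coprod.inr (FreeGroup.of i) *
      (Monoid.Coprod.inl ((φ i a : G)) : Monoid.Coprod G (FreeGroup ι))⁻¹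

/-- The HNN extension `G*_{φ₁,…,φₙ}` of `G` along the isomorphisms `φᵢ : Aᵢ ≃ Bᵢ`,
with one stable letter `tᵢ` for each index `i`. -/
def MultiHNN {G : Type*} [Group G] {ι : Type*} (A B : ι → Subgroup G)
    (φ : ∀ i, A i ≃* B i) : Type _ :=
  Monoid.Coprod G (FreeGroup ι) ⧸ Subgroup.normalClosure (MultiHNNRels A B φ)

instance {G : Type*} [Group G] {ι : Type*} (A B : ι → Subgroup G)
    (φ : ∀ i, A i ≃* B i) : Group (MultiHNN A B φ) :=
  inferInstanceAs (Group (Monoid.Coprod G (FreeGroup ι) ⧸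
    Subgroup.normalClosure (MultiHNNRels A B φ)))

/-- The canonical homomorphism `ι : G → G*_{φ₁,…,φₙ}`. -/
def MultiHNN.of {G : Type*} [Group G] {ι : Type*} (A B : ι → Subgroup G)
    (φ : ∀ i, A i ≃* B i) : G →* MultiHNN A B φ :=
  (QuotientGroup.mk' (Subgroup.normalClosure (MultiHNNRels A B φ))).comp Monoid.Coprod.inl

/-- The stable letter `tᵢ` of the HNN extension `G*_{φ₁,…,φₙ}`. -/
def MultiHNN.t {G : Type*} [Group G] {ι : Type*} (A B : ι → Subgroup G)
    (φ : ∀ i, A i ≃* B i) (i : ι) : MultiHNN A B φ :=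
  QuotientGroup.mk' (Subgroup.normalClosure (MultiHNNRels A B φ))
    (Monoid.Coprod.inr (FreeGroup.of i))


/-- The relation `tᵢ⁻¹ ι(a) tᵢ = ι(φᵢ a)` holds in the HNN extension. -/
theorem MultiHNN.relation {G : Type*} [Group G] {ι : Type*} (A B : ι → Subgroup G)
    (φ : ∀ i, A i ≃* B i) (i : ι) (a : A i) :
    (MultiHNN.t A B φ i)⁻¹ * MultiHNN.of A B φ (a : G) * MultiHNN.t A B φ i *
      (MultiHNN.of A B φ ((φ i a : G)))⁻¹ = 1 := by
  have h : ((Monoid.Coprod.inr (FreeGroup.of i) : Monoid.Coprod G (FreeGroup ι))⁻¹ *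
      Monoid.Coprod.inl (a : G) * Monoid.Coprod.inr (FreeGroup.of i) *
      (Monoid.Coprod.inl ((φ i a : G)) : Monoid.Coprod G (FreeGroup ι))⁻¹) ∈
      Subgroup.normalClosure (MultiHNNRels A B φ) :=
    Subgroup.subset_normalClosure (Set.mem_iUnion.2 ⟨i, Set.mem_range.2 ⟨a, rfl⟩⟩)
  have := (QuotientGroup.eq_one_iff _).2 h
  exact this

/-- Lemma (kernel of the induced map on HNN extensions). Let `K ⊴ G` be a good normal
subgroup with respect to `H = G*_{φ₁,…,φₙ}`, let `ψᵢ : AᵢK/K ≃ BᵢK/K` be the isomorphisms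
induced by the `φᵢ`, let `H_K = (G/K)*_{ψ₁,…,ψₙ}`, and let `Φ : H → H_K` be the homomorphism
determined by `ι(g) ↦ gK` and `tᵢ ↦ t̄ᵢ`. Then `ker Φ = ⟪ι(K)⟫^H`. -/
theorem ker_induced_eq_normalClosure {G : Type*} [Group G] {n : ℕ}
    (A B : Fin n → Subgroup G) (φ : ∀ i, A i ≃* B i) (K : Subgroup G) (hK : K.Normal)
    (hgood : ∀ i, Subgroup.map ((B i).subtype.comp (φ i).toMonoidHom)
        (K.comap (A i).subtype) = K ⊓ B i)
    (ψ : ∀ i, ((A i).map (QuotientGroup.mk' K) : Subgroup (G ⧸ K)) ≃*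
        ((B i).map (QuotientGroup.mk' K) : Subgroup (G ⧸ K)))
    (hψ : ∀ i (a : A i)
        (h : QuotientGroup.mk' K (a : G) ∈ (A i).map (QuotientGroup.mk' K)),
      ((ψ i ⟨QuotientGroup.mk' K (a : G), h⟩ : ((B i).map (QuotientGroup.mk' K))) : G ⧸ K) =
        QuotientGroup.mk' K ((φ i a : G)))
    (Φ : MultiHNN A B φ →*
      MultiHNN (fun i => (A i).map (QuotientGroup.mk' K))
        (fun i => (B i).map (QuotientGroup.mk' K)) ψ)
    (hΦg : ∀ g : G, Φ (MultiHNN.of A B φ g) =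
      MultiHNN.of _ _ ψ (QuotientGroup.mk' K g))
    (hΦt : ∀ i, Φ (MultiHNN.t A B φ i) = MultiHNN.t _ _ ψ i) :
    Φ.ker = Subgroup.normalClosure ((MultiHNN.of A B φ) '' (K : Set G)) := by
  set N := Subgroup.normalClosure ((MultiHNN.of A B φ) '' (K : Set G)) with hN
  have hNnormal : N.Normal := Subgroup.normalClosure_normal
  -- the quotient map
  set π : MultiHNN A B φ →* MultiHNN A B φ ⧸ N := QuotientGroup.mk' N with hπ
  -- map on G/K
  have hKer : K ≤ (π.comp (MultiHNN.of A B φ)).ker := by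
    intro k hk
    simp only [MonoidHom.mem_ker, MonoidHom.comp_apply, hπ]
    exact (QuotientGroup.eq_one_iff _).2 (Subgroup.subset_normalClosure ⟨k, hk, rfl⟩)
  set fG : G ⧸ K →* MultiHNN A B φ ⧸ N :=
    QuotientGroup.lift K (π.comp (MultiHNN.of A B φ)) hKer with hfG
  set fF : FreeGroup (Fin n) →* MultiHNN A B φ ⧸ N :=
    FreeGroup.lift (fun i => π (MultiHNN.t A B φ i)) with hfF
  set f : Monoid.Coprod (G ⧸ K) (FreeGroup (Fin n)) →* MultiHNN A B φ ⧸ N :=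
    Monoid.Coprod.lift fG fF with hf
  have hrels : Subgroup.normalClosure
      (MultiHNNRels (fun i => (A i).map (QuotientGroup.mk' K))
        (fun i => (B i).map (QuotientGroup.mk' K)) ψ) ≤ f.ker := by
    refine Subgroup.normalClosure_le_normal ?_
    rintro x hx
    simp only [MultiHNNRels, Set.mem_iUnion, Set.mem_range] at hx
    obtain ⟨i, a, rfl⟩ := hx
    obtain ⟨g, hg, hga⟩ := a.2
    have ha : a = ⟨QuotientGroup.mk' K (⟨g, hg⟩ : A i), by
        exact hga ▸ a.2⟩ := Subtype.ext (by simp [hga])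
    simp only [SetLike.mem_coe, MonoidHom.mem_ker, map_mul, map_inv,
      Monoid.Coprod.lift_apply_inl, Monoid.Coprod.lift_apply_inr, hf]
    rw [ha, hψ i ⟨g, hg⟩]
    have h1 : fG (QuotientGroup.mk' K ((⟨g, hg⟩ : A i) : G)) = π (MultiHNN.of A B φ g) :=
      rfl
    have h2 : fG (QuotientGroup.mk' K ((φ i ⟨g, hg⟩ : G))) =
        π (MultiHNN.of A B φ (φ i ⟨g, hg⟩ : G)) := rfl
    have h3 : fF (FreeGroup.of i) = π (MultiHNN.t A B φ i) := FreeGroup.lift_apply_of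
    rw [h1, h2, h3, ← map_inv, ← map_inv, ← map_mul, ← map_mul, ← map_mul]
    rw [MultiHNN.relation A B φ i ⟨g, hg⟩]
    exact map_one π
  set Θ : MultiHNN (fun i => (A i).map (QuotientGroup.mk' K))
      (fun i => (B i).map (QuotientGroup.mk' K)) ψ →* MultiHNN A B φ ⧸ N :=
    QuotientGroup.lift _ f hrels with hΘ
  have hfactor : Θ.comp Φ = π := by
    have h1 : (Θ.comp Φ).comp (QuotientGroup.mk'
        (Subgroup.normalClosure (MultiHNNRels A B φ))) =
        π.comp (QuotientGroup.mk' (Subgroup.normalClosure (MultiHNNRels A B φ))) := by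
      apply Monoid.Coprod.hom_ext
      · ext g
        have : Φ (MultiHNN.of A B φ g) = MultiHNN.of _ _ ψ (QuotientGroup.mk' K g) := hΦg g
        simp only [MonoidHom.comp_apply]
        show Θ (Φ (MultiHNN.of A B φ g)) = π (MultiHNN.of A B φ g)
        rw [this]
        rfl
      · ext i
        simp only [MonoidHom.comp_apply]
        show Θ (Φ (MultiHNN.t A B φ i)) = π (MultiHNN.t A B φ i)
        rw [hΦt i]
        show f (Monoid.Coprod.inr (FreeGroup.of i)) = π (MultiHNN.t A B φ i)
        simp [hf, hfF]
    exact MonoidHom.ext fun x => QuotientGroup.induction_on x fun y =>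
      DFunLike.congr_fun h1 y
  apply le_antisymm
  · intro x hx
    have : π x = 1 := by
      rw [← hfactor]
      simp only [MonoidHom.comp_apply]
      rw [MonoidHom.mem_ker.1 hx, map_one]
    exact (QuotientGroup.eq_one_iff x).1 this
  · refine Subgroup.normalClosure_le_normal ?_
    rintro x ⟨k, hk, rfl⟩
    simp only [SetLike.mem_coe, MonoidHom.mem_ker, hΦg k]
    have : QuotientGroup.mk' K k = 1 := (QuotientGroup.eq_one_iff k).2 hk
    rw [this, map_one]
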